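/- Let c > 1 and let ψ* be the unique ψ ∈ (0,1) with c·(1 + ln ψ) = ψ. Define g(ψ) = (c − ψ)/(−ψ·ln ψ) for ψ ∈ (0,1). Then g is strictly decreasing on (0, ψ*], strictly increasing on [ψ*, 1), and in particular g(ψ*) < g(ψ) for every ψ ∈ (0,1) with ψ ≠ ψ*. -/

import Mathlib

private lemma csma_hasDerivAt_g (c x : ℝ) (hx : 0 < x) (hx1 : x < 1) :
    HasDerivAt (fun ψ : ℝ => (c - ψ) / (-(ψ * Real.log ψ)))
      ((c * (1 + Real.log x) - x) / (x * Real.log x) ^ 2) x := by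
  have hlog : Real.log x < 0 := Real.log_neg hx hx1
  have hD : -(x * Real.log x) ≠ 0 := by nlinarith
  have h1 : HasDerivAt (fun ψ : ℝ => c - ψ) (-1) x := by
    simpa using (hasDerivAt_id x).const_sub c
  have h2 : HasDerivAt (fun ψ : ℝ => -(ψ * Real.log ψ)) (-(Real.log x + 1)) x := by
    have := ((hasDerivAt_id x).mul (Real.hasDerivAt_log hx.ne')).neg
    refine this.congr_deriv ?_
    simp [hx.ne']
  have := h1.div h2 hD
  refine this.congr_deriv ?_
  have hx0 : x * Real.log x ≠ 0 := by nlinarith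
  field_simp
  ring

private lemma csma_h_mono (c : ℝ) (hc : 1 < c) :
    StrictMonoOn (fun x : ℝ => c * (1 + Real.log x) - x) (Set.Ioo 0 1) := by
  have heq : (fun x : ℝ => c * (1 + Real.log x) - x)
      = fun x : ℝ => c + c * Real.log x - x := by funext x; ring
  rw [heq]
  apply strictMonoOn_of_deriv_pos (convex_Ioo 0 1)
  · apply ContinuousOn.sub (ContinuousOn.add continuousOn_const _) continuousOn_id
    exact (Real.continuousOn_log.mono (by intro x hx; exact ne_of_gt hx.1)).const_smul c
  · intro x hx
    rw [interior_Ioo] at hx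
    have hd : HasDerivAt (fun x : ℝ => c + c * Real.log x - x) (c * x⁻¹ - 1) x := by
      exact (((Real.hasDerivAt_log hx.1.ne').const_mul c).const_add c).sub
        (hasDerivAt_id x)
    rw [hd.deriv]
    have h1 : 1 < c * x⁻¹ := by
      have hxi : 1 < x⁻¹ := (one_lt_inv₀ hx.1).mpr hx.2
      nlinarith
    linarith

theorem csma_g_min (c : ℝ) (hc : 1 < c) (ψstar : ℝ)
    (hψstar : ψstar ∈ Set.Ioo (0 : ℝ) 1) (hroot : c * (1 + Real.log ψstar) = ψstar) :
    StrictAntiOn (fun ψ : ℝ => (c - ψ) / (-(ψ * Real.log ψ))) (Set.Ioc 0 ψstar) ∧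
    StrictMonoOn (fun ψ : ℝ => (c - ψ) / (-(ψ * Real.log ψ))) (Set.Ico ψstar 1) ∧
    ∀ ψ ∈ Set.Ioo (0 : ℝ) 1, ψ ≠ ψstar →
      (c - ψstar) / (-(ψstar * Real.log ψstar)) < (c - ψ) / (-(ψ * Real.log ψ)) := by
  obtain ⟨hs0, hs1⟩ := hψstar
  have hmono := csma_h_mono c hc
  have hcont : ContinuousOn (fun ψ : ℝ => (c - ψ) / (-(ψ * Real.log ψ)))
      {x : ℝ | 0 < x ∧ x < 1} := by
    apply ContinuousOn.div
    · exact (continuous_const.sub continuous_id).continuousOn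
    · exact ((continuousOn_id.mul
        (Real.continuousOn_log.mono (by intro x hx; exact ne_of_gt hx.1))).neg)
    · intro x hx
      have hlog : Real.log x < 0 := Real.log_neg hx.1 hx.2
      nlinarith [hx.1]
  have hsq : ∀ x : ℝ, 0 < x → x < 1 → 0 < (x * Real.log x) ^ 2 := by
    intro x hx hx1
    have hlog : Real.log x < 0 := Real.log_neg hx hx1
    apply pow_two_pos_of_ne_zero
    nlinarith
  have hanti : StrictAntiOn (fun ψ : ℝ => (c - ψ) / (-(ψ * Real.log ψ)))
      (Set.Ioc 0 ψstar) := by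
    apply strictAntiOn_of_deriv_neg (convex_Ioc 0 ψstar)
    · exact hcont.mono (by intro x hx; exact ⟨hx.1, lt_of_le_of_lt hx.2 hs1⟩)
    · intro x hx
      rw [interior_Ioc] at hx
      have hx1 : x < 1 := hx.2.trans hs1
      rw [(csma_hasDerivAt_g c x hx.1 hx1).deriv]
      apply div_neg_of_neg_of_pos _ (hsq x hx.1 hx1)
      have := hmono ⟨hx.1, hx1⟩ ⟨hs0, hs1⟩ hx.2
      simp only at this
      linarith [hroot ▸ this]
  have hmono' : StrictMonoOn (fun ψ : ℝ => (c - ψ) / (-(ψ * Real.log ψ)))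
      (Set.Ico ψstar 1) := by
    apply strictMonoOn_of_deriv_pos (convex_Ico ψstar 1)
    · exact hcont.mono (by intro x hx; exact ⟨lt_of_lt_of_le hs0 hx.1, hx.2⟩)
    · intro x hx
      rw [interior_Ico] at hx
      have hx0 : 0 < x := hs0.trans hx.1
      rw [(csma_hasDerivAt_g c x hx0 hx.2).deriv]
      apply div_pos _ (hsq x hx0 hx.2)
      have := hmono ⟨hs0, hs1⟩ ⟨hx0, hx.2⟩ hx.1
      simp only at this
      linarith [hroot ▸ this]
  refine ⟨hanti, hmono', ?_⟩
  intro ψ hψ hne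
  rcases lt_or_gt_of_ne hne with h | h
  · exact hanti ⟨hψ.1, h.le⟩ ⟨hs0, le_refl _⟩ h
  · exact hmono' ⟨le_refl _, hs1⟩ ⟨h.le, hψ.2⟩ h
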